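/- Let p₁ ≥ 0 and m ≥ 0 be integers, set p₂ = p₁ + m, and let H be a real symmetric positive definite p₂×p₂ matrix with top-left p₁×p₁ block H_θθ. Let J be a real symmetric positive semidefinite p₂×p₂ matrix; write J₁₁ for its top-left p₁×p₁ block, J₁₂ for its first p₁ rows (a p₁×p₂ matrix), and J₂₁ = J₁₂ᵀ. Form the (p₁+p₂)×(p₁+p₂) block matrix B = [[−J₁₁H_θθ⁻¹, J₁₂H⁻¹],[−J₂₁H_θθ⁻¹, J·H⁻¹]]. Then X^{2p₁} divides the characteristic polynomial of B; equivalently, B has eigenvalue 0 with algebraic multiplicity at least 2p₁, so B has at most m nonzero eigenvalues (counted with multiplicity). -/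

import Mathlib

open Matrix Polynomial

section Aux
variable {R : Type*} [CommRing R] {n m : Type*} [Fintype n] [Fintype m] [DecidableEq n] [DecidableEq m]

lemma aux_charmatrix_eq (M : Matrix n n R) :
    charmatrix M = (X : R[X]) • (1 : Matrix n n R[X]) - M.map C := by
  rw [charmatrix, RingHom.mapMatrix_apply]
  congr 1
  simp [Matrix.scalar, smul_eq_diagonal_mul]

lemma aux_charpoly_mul_X_pow (A : Matrix n m R) (B : Matrix m n R) :
    (A * B).charpoly * X ^ (Fintype.card m) = (B * A).charpoly * X ^ (Fintype.card n) := by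
  classical
  set A' : Matrix n m R[X] := A.map C with hA'
  set B' : Matrix m n R[X] := B.map C with hB'
  set sn : Matrix n n R[X] := (X : R[X]) • 1 with hsn
  set sm : Matrix m m R[X] := (X : R[X]) • 1 with hsm
  have hAB : charmatrix (A * B) = sn - A' * B' := by
    rw [aux_charmatrix_eq, Matrix.map_mul]
  have hBA : charmatrix (B * A) = sm - B' * A' := by
    rw [aux_charmatrix_eq, Matrix.map_mul]
  have key1 :
      fromBlocks sn A' ((X : R[X]) • B') sm =
        fromBlocks 1 0 B' 1 * fromBlocks sn A' 0 (sm - B' * A') := by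
    rw [fromBlocks_multiply]
    simp [hsn, hsm, Matrix.mul_smul, Matrix.smul_mul, mul_add, add_sub_cancel]
  have key2 :
      fromBlocks sn A' ((X : R[X]) • B') sm =
        fromBlocks (sn - A' * B') A' 0 sm * fromBlocks 1 0 B' 1 := by
    rw [fromBlocks_multiply]
    simp [hsn, hsm, Matrix.mul_smul, Matrix.smul_mul, sub_add_cancel]
  have hdet1 : det (fromBlocks sn A' ((X : R[X]) • B') sm) =
      X ^ (Fintype.card n) * (B * A).charpoly := by
    rw [key1, det_mul, det_fromBlocks_zero₁₂, det_fromBlocks_zero₂₁, det_one, det_one, hsn,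
      det_smul, det_one, ← hBA]
    simp [Matrix.charpoly]
  have hdet2 : det (fromBlocks sn A' ((X : R[X]) • B') sm) =
      (A * B).charpoly * X ^ (Fintype.card m) := by
    rw [key2, det_mul, det_fromBlocks_zero₂₁, det_fromBlocks_zero₁₂, det_one, det_one, hsm,
      det_smul, det_one, ← hAB]
    simp [Matrix.charpoly]
  rw [← hdet2, hdet1]
  ring

end Aux


/-- For `H` symmetric positive definite of size `p₂ = p₁ + m` with top-left block
`H_θθ`, and `J` symmetric positive semidefinite of the same size with top-left block
`J₁₁` and first `p₁` rows `J₁₂` (and `J₂₁ = J₁₂ᵀ`), the matrix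
`B = [[−J₁₁H_θθ⁻¹, J₁₂H⁻¹],[−J₂₁H_θθ⁻¹, J·H⁻¹]]` has eigenvalue `0` with algebraic
multiplicity at least `2p₁`: `X^(2p₁)` divides its characteristic polynomial. -/
theorem X_pow_dvd_charpoly_B (p₁ m : ℕ)
    (Htt : Matrix (Fin p₁) (Fin p₁) ℝ) (Htz : Matrix (Fin p₁) (Fin m) ℝ)
    (Hzt : Matrix (Fin m) (Fin p₁) ℝ) (Hzz : Matrix (Fin m) (Fin m) ℝ)
    (hH : (Matrix.fromBlocks Htt Htz Hzt Hzz).PosDef)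
    (J : Matrix (Fin p₁ ⊕ Fin m) (Fin p₁ ⊕ Fin m) ℝ) (hJ : J.PosSemidef) :
    (X : Polynomial ℝ) ^ (2 * p₁) ∣
      (Matrix.fromBlocks
        (-(J.toBlocks₁₁ * Htt⁻¹))
        ((Matrix.fromCols J.toBlocks₁₁ J.toBlocks₁₂) *
          (Matrix.fromBlocks Htt Htz Hzt Hzz)⁻¹)
        (-((Matrix.fromCols J.toBlocks₁₁ J.toBlocks₁₂)ᵀ * Htt⁻¹))
        (J * (Matrix.fromBlocks Htt Htz Hzt Hzz)⁻¹)).charpoly := by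
  classical
  obtain ⟨h1, h2, h3, h4⟩ := isHermitian_fromBlocks_iff.mp hH.1
  -- h2 : Htzᴴ = Hzt
  -- Htt is positive definite
  have hA : Htt.PosDef := by
    refine PosDef.of_dotProduct_mulVec_pos h1 fun x hx => ?_
    have hx' : (Sum.elim x (0 : Fin m → ℝ)) ≠ 0 := by
      intro hc
      apply hx
      funext i
      simpa using congrFun hc (Sum.inl i)
    have := hH.dotProduct_mulVec_pos hx'
    simpa [Function.star_sumElim, fromBlocks_mulVec, sumElim_dotProduct_sumElim]
      using this
  letI iA : Invertible Htt := hA.isUnit.invertible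
  have hTT : ⅟Htt = Htt⁻¹ := invOf_eq_nonsing_inv Htt
  set S : Matrix (Fin m) (Fin m) ℝ := Hzz - Hzt * Htt⁻¹ * Htz with hSdef
  -- the Schur complement is positive definite
  have hS : S.PosDef := by
    have hherm : S.IsHermitian := by
      have := (IsHermitian.fromBlocks₁₁ Htz Hzz h1).mp (by rw [h2]; exact hH.1)
      rwa [h2] at this
    refine PosDef.of_dotProduct_mulVec_pos hherm fun y hy => ?_
    set x : Fin p₁ → ℝ := -((Htt⁻¹ * Htz) *ᵥ y) with hxdef
    have hne : Sum.elim x y ≠ 0 := by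
      intro hc
      apply hy
      funext i
      simpa using congrFun hc (Sum.inr i)
    have hq := hH.dotProduct_mulVec_pos hne
    rw [dotProduct_mulVec] at hq
    have hsc := schur_complement_eq₁₁ (α := ℝ) Htz Hzz x y h1
    rw [h2] at hsc
    rw [hsc, hxdef, neg_add_cancel] at hq
    simp only [star_zero, zero_vecMul, zero_dotProduct, zero_add, h2] at hq
    rwa [dotProduct_mulVec]
  letI iS' : Invertible (Hzz - Hzt * ⅟Htt * Htz) := by
    rw [hTT]
    exact hS.isUnit.invertible
  letI iH : Invertible (Matrix.fromBlocks Htt Htz Hzt Hzz) := hH.isUnit.invertible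
  have hSS : ⅟(Hzz - Hzt * ⅟Htt * Htz) = S⁻¹ := by rw [invOf_eq_nonsing_inv, hTT]
  have hHinv : (Matrix.fromBlocks Htt Htz Hzt Hzz)⁻¹ = Matrix.fromBlocks
      (Htt⁻¹ + Htt⁻¹ * Htz * S⁻¹ * Hzt * Htt⁻¹) (-(Htt⁻¹ * Htz * S⁻¹))
      (-(S⁻¹ * Hzt * Htt⁻¹)) S⁻¹ := by
    rw [← invOf_eq_nonsing_inv, invOf_fromBlocks₁₁_eq, hSS, hTT]
  set H : Matrix (Fin p₁ ⊕ Fin m) (Fin p₁ ⊕ Fin m) ℝ := Matrix.fromBlocks Htt Htz Hzt Hzz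
    with hHdef
  -- symmetry of J
  have hJ11 : J.toBlocks₁₁ᵀ = J.toBlocks₁₁ := by
    ext i j
    have := congrFun (congrFun hJ.1 (Sum.inl i)) (Sum.inl j)
    simpa [conjTranspose_apply, toBlocks₁₁] using this
  have hJ12 : J.toBlocks₁₂ᵀ = J.toBlocks₂₁ := by
    ext i j
    have := congrFun (congrFun hJ.1 (Sum.inr i)) (Sum.inl j)
    simpa [conjTranspose_apply, toBlocks₁₂, toBlocks₂₁] using this
  -- the factorization B = P * Q
  set K : Matrix (Fin p₁) (Fin p₁ ⊕ Fin m) ℝ := Matrix.fromCols J.toBlocks₁₁ J.toBlocks₁₂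
    with hKdef
  set E : Matrix (Fin p₁ ⊕ Fin m) (Fin p₁) ℝ := Matrix.fromRows 1 0 with hEdef
  set P : Matrix ((Fin p₁) ⊕ (Fin p₁ ⊕ Fin m)) (Fin p₁ ⊕ Fin m) ℝ := Matrix.fromRows K J
    with hPdef
  set Q : Matrix (Fin p₁ ⊕ Fin m) ((Fin p₁) ⊕ (Fin p₁ ⊕ Fin m)) ℝ :=
    Matrix.fromCols (-(E * Htt⁻¹)) H⁻¹ with hQdef
  have hB : Matrix.fromBlocks
        (-(J.toBlocks₁₁ * Htt⁻¹)) (K * H⁻¹) (-(Kᵀ * Htt⁻¹)) (J * H⁻¹) = P * Q := by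
    rw [hPdef, hQdef, fromRows_mul_fromCols]
    have hKE : K * E = J.toBlocks₁₁ := by
      rw [hKdef, hEdef, fromCols_mul_fromRows]
      simp
    have hJE : J * E = Kᵀ := by
      rw [hKdef, transpose_fromCols, hJ11, hJ12, hEdef]
      nth_rewrite 1 [← fromBlocks_toBlocks J]
      rw [fromBlocks_mul_fromRows]
      simp
    rw [Matrix.mul_neg, Matrix.mul_neg, ← Matrix.mul_assoc, ← Matrix.mul_assoc, hKE, hJE]
  -- Q * P factors through Fin m
  set W : Matrix (Fin p₁ ⊕ Fin m) (Fin m) ℝ := Matrix.fromRows (-(Htt⁻¹ * Htz)) 1 with hWdef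
  set V : Matrix (Fin m) (Fin p₁ ⊕ Fin m) ℝ :=
    (Matrix.fromCols (-(S⁻¹ * Hzt * Htt⁻¹)) S⁻¹) * J with hVdef
  have hQP : Q * P = W * V := by
    rw [hQdef, hPdef, fromCols_mul_fromRows]
    have hEK : (E * Htt⁻¹) * K = Matrix.fromBlocks Htt⁻¹ 0 0 0 * J := by
      rw [hEdef, fromRows_mul, Matrix.one_mul, Matrix.zero_mul]
      conv_rhs => rw [← fromBlocks_toBlocks J]
      rw [fromBlocks_multiply, hKdef]
      have : Matrix.fromRows (Htt⁻¹) (0 : Matrix (Fin m) (Fin p₁) ℝ) *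
          Matrix.fromCols J.toBlocks₁₁ J.toBlocks₁₂ =
          Matrix.fromBlocks (Htt⁻¹ * J.toBlocks₁₁) (Htt⁻¹ * J.toBlocks₁₂)
            ((0 : Matrix (Fin m) (Fin p₁) ℝ) * J.toBlocks₁₁) ((0 : Matrix (Fin m) (Fin p₁) ℝ) * J.toBlocks₁₂) := fromRows_mul_fromCols _ _ _ _
      rw [this]
      simp
    have hWV0 : H⁻¹ - Matrix.fromBlocks Htt⁻¹ 0 0 0 =
        W * Matrix.fromCols (-(S⁻¹ * Hzt * Htt⁻¹)) S⁻¹ := by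
      rw [hWdef, fromRows_mul_fromCols, hHinv]
      ext (i | i) (j | j) <;>
        simp [fromBlocks_apply₁₁, fromBlocks_apply₁₂, fromBlocks_apply₂₁, fromBlocks_apply₂₂,
          Matrix.neg_mul, Matrix.mul_neg, Matrix.sub_apply, Matrix.neg_apply, Matrix.add_apply, Matrix.mul_assoc]
    rw [Matrix.neg_mul, hEK, neg_add_eq_sub, ← Matrix.sub_mul, hWV0, hVdef, Matrix.mul_assoc]
  -- put everything together
  have e1 := aux_charpoly_mul_X_pow P Q
  have e2 := aux_charpoly_mul_X_pow W V
  rw [hQP] at e1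
  simp only [Fintype.card_sum, Fintype.card_fin] at e1 e2
  have hXne : (X : Polynomial ℝ) ^ (p₁ + m + m) ≠ 0 := pow_ne_zero _ X_ne_zero
  have key : (P * Q).charpoly * X ^ (p₁ + m + m) =
      ((X : Polynomial ℝ) ^ (2 * p₁) * (V * W).charpoly) * X ^ (p₁ + m + m) := by
    calc (P * Q).charpoly * X ^ (p₁ + m + m)
        = ((P * Q).charpoly * X ^ (p₁ + m)) * X ^ m := by ring
      _ = ((W * V).charpoly * X ^ (p₁ + (p₁ + m))) * X ^ m := by rw [e1]
      _ = ((W * V).charpoly * X ^ m) * X ^ (p₁ + (p₁ + m)) := by ring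
      _ = ((V * W).charpoly * X ^ (p₁ + m)) * X ^ (p₁ + (p₁ + m)) := by rw [e2]
      _ = ((X : Polynomial ℝ) ^ (2 * p₁) * (V * W).charpoly) * X ^ (p₁ + m + m) := by ring
  have hfin := mul_right_cancel₀ hXne key
  rw [hB, hfin]
  exact Dvd.intro _ rfl
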